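/- For every integer n with n ≥ 2 and n ≡ 2 (mod 4), the n-dimensional balanced shuffle-cube BSQ_n is vertex-transitive, i.e., for any two vertices u and v of BSQ_n there is a graph automorphism of BSQ_n mapping u to v. -/

import Mathlib

/-- Vertices of the `n`-dimensional balanced shuffle-cube: all binary strings
of length `n` (encoded as functions `ℕ → Bool` vanishing from position `n` on). -/
def BSQVertex (n : ℕ) : Type :=
  {u : ℕ → Bool // ∀ i, n ≤ i → u i = false}

/-- The value, modulo 4, of the two-bit string `ab` (with `a` the more
significant bit). -/
def pairVal (a b : Bool) : ZMod 4 :=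
  2 * (a.toNat : ZMod 4) + (b.toNat : ZMod 4)

/-- The adjacency condition of the balanced shuffle-cube `BSQ_{4k+2}`
(parametrised by `k`).  For `k = 0` (i.e. `BSQ₂`, a 4-cycle) two strings are
adjacent iff they differ in exactly one of bits `0` and `1`.  For `n = 4k+6`,
two strings are adjacent iff either they lie in a common copy of `BSQ_{4k+2}`
(the top four bits agree) and are adjacent there, or they lie in different
copies, the last `n-4` bits agree, bits `u_{n-2}` and `v_{n-2}` differ,
`v_{n-1}v_{n-2} = u_{n-1}u_{n-2} ± 1 (mod 4)`, and
`v_{n-3}v_{n-4} = u_{n-3}u_{n-4} + (-1)^{u_{n-2}} (mod 4)` or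
`v_{n-3}v_{n-4} = u_{n-3}u_{n-4}`. -/
def bsqRel : ℕ → (ℕ → Bool) → (ℕ → Bool) → Prop
  | 0, u, v => ((u 0 = v 0) ↔ ¬ (u 1 = v 1))
  | k + 1, u, v =>
      ((∀ i, 4 * k + 2 ≤ i → i ≤ 4 * k + 5 → u i = v i) ∧ bsqRel k u v) ∨
      ((∀ i, i < 4 * k + 2 → u i = v i) ∧
        u (4 * k + 4) ≠ v (4 * k + 4) ∧
        (pairVal (v (4 * k + 5)) (v (4 * k + 4)) =
            pairVal (u (4 * k + 5)) (u (4 * k + 4)) + 1 ∨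
          pairVal (v (4 * k + 5)) (v (4 * k + 4)) =
            pairVal (u (4 * k + 5)) (u (4 * k + 4)) - 1) ∧
        (pairVal (v (4 * k + 3)) (v (4 * k + 2)) =
            pairVal (u (4 * k + 3)) (u (4 * k + 2)) +
              (if u (4 * k + 4) = true then -1 else 1) ∨
          pairVal (v (4 * k + 3)) (v (4 * k + 2)) =
            pairVal (u (4 * k + 3)) (u (4 * k + 2))))

/-- The `n`-dimensional balanced shuffle-cube `BSQ_n` (for `n ≡ 2 (mod 4)`,
so that `n = 4k+2` with `k = (n-2)/4`). -/
def BSQ (n : ℕ) : SimpleGraph (BSQVertex n) :=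
  SimpleGraph.fromRel (fun u v => bsqRel ((n - 2) / 4) u.1 v.1)

/-- For every `n ≥ 2` with `n ≡ 2 (mod 4)`, the balanced shuffle-cube
`BSQ_n` is vertex-transitive. -/
def hiBit (x : ZMod 4) : Bool := decide (x = 2 ∨ x = 3)
def loBit (x : ZMod 4) : Bool := decide (x = 1 ∨ x = 3)
lemma pairVal_hi_lo : ∀ x : ZMod 4, pairVal (hiBit x) (loBit x) = x := by decide
lemma hiBit_pairVal : ∀ a b : Bool, hiBit (pairVal a b) = a := by decide
lemma loBit_pairVal : ∀ a b : Bool, loBit (pairVal a b) = b := by decide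
lemma pairVal_inj : ∀ a b a' b' : Bool, pairVal a b = pairVal a' b' ↔ (a = a' ∧ b = b') := by decide
def newLow (c d l : ZMod 4) : ZMod 4 := if loBit c then d - l else d + l
lemma newLow_inv : ∀ c d l : ZMod 4, newLow (-c) (if loBit c then d else -d) (newLow c d l) = l := by decide
lemma loBit_neg : ∀ c : ZMod 4, loBit (-c) = loBit c := by decide
lemma newLow_inj : ∀ c d x y : ZMod 4, newLow c d x = newLow c d y ↔ x = y := by decide
lemma newLow_target : ∀ c lu lv : ZMod 4, newLow c (if loBit c then lv + lu else lv - lu) lu = lv := by decide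
lemma keyA : ∀ (p2 p3 p4 p5 q2 q3 q4 q5 : Bool) (c d : ZMod 4),
  ((¬ loBit (pairVal p5 p4 + c) = loBit (pairVal q5 q4 + c)) ∧
   (pairVal q5 q4 + c = (pairVal p5 p4 + c) + 1 ∨ pairVal q5 q4 + c = (pairVal p5 p4 + c) - 1) ∧
   (newLow c d (pairVal q3 q2) = newLow c d (pairVal p3 p2) + (if loBit (pairVal p5 p4 + c) = true then -1 else 1) ∨
    newLow c d (pairVal q3 q2) = newLow c d (pairVal p3 p2)))
  ↔ ((¬ p4 = q4) ∧ (pairVal q5 q4 = pairVal p5 p4 + 1 ∨ pairVal q5 q4 = pairVal p5 p4 - 1) ∧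
     (pairVal q3 q2 = pairVal p3 p2 + (if p4 = true then -1 else 1) ∨ pairVal q3 q2 = pairVal p3 p2)) := by decide
lemma xor_cancel : ∀ a b : Bool, xor (xor a b) b = a := by decide
lemma xor_target : ∀ a b : Bool, xor a (xor a b) = b := by decide
lemma xor_eq_iff : ∀ a b c : Bool, (xor a c = xor b c) ↔ (a = b) := by decide

def tMap (k : ℕ) (c d : ZMod 4) (u : ℕ → Bool) : ℕ → Bool := fun i =>
  if i = 4 * k + 2 then loBit (newLow c d (pairVal (u (4 * k + 3)) (u (4 * k + 2)))) else
  if i = 4 * k + 3 then hiBit (newLow c d (pairVal (u (4 * k + 3)) (u (4 * k + 2)))) else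
  if i = 4 * k + 4 then loBit (pairVal (u (4 * k + 5)) (u (4 * k + 4)) + c) else
  if i = 4 * k + 5 then hiBit (pairVal (u (4 * k + 5)) (u (4 * k + 4)) + c) else u i

lemma tMap_a2 (k : ℕ) (c d : ZMod 4) (u : ℕ → Bool) :
    tMap k c d u (4 * k + 2) = loBit (newLow c d (pairVal (u (4 * k + 3)) (u (4 * k + 2)))) := by
  simp only [tMap]; rw [if_pos trivial]
lemma tMap_a3 (k : ℕ) (c d : ZMod 4) (u : ℕ → Bool) :
    tMap k c d u (4 * k + 3) = hiBit (newLow c d (pairVal (u (4 * k + 3)) (u (4 * k + 2)))) := by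
  simp only [tMap]; rw [if_neg (by omega), if_pos trivial]
lemma tMap_a4 (k : ℕ) (c d : ZMod 4) (u : ℕ → Bool) :
    tMap k c d u (4 * k + 4) = loBit (pairVal (u (4 * k + 5)) (u (4 * k + 4)) + c) := by
  simp only [tMap]; rw [if_neg (by omega), if_neg (by omega), if_pos trivial]
lemma tMap_a5 (k : ℕ) (c d : ZMod 4) (u : ℕ → Bool) :
    tMap k c d u (4 * k + 5) = hiBit (pairVal (u (4 * k + 5)) (u (4 * k + 4)) + c) := by
  simp only [tMap]; rw [if_neg (by omega), if_neg (by omega), if_neg (by omega), if_pos trivial]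
lemma tMap_out (k : ℕ) (c d : ZMod 4) (u : ℕ → Bool) (i : ℕ)
    (h : i < 4 * k + 2 ∨ 4 * k + 5 < i) : tMap k c d u i = u i := by
  simp only [tMap]; rw [if_neg (by omega), if_neg (by omega), if_neg (by omega), if_neg (by omega)]
lemma tMap_low (k : ℕ) (c d : ZMod 4) (u : ℕ → Bool) :
    pairVal (tMap k c d u (4 * k + 3)) (tMap k c d u (4 * k + 2)) =
      newLow c d (pairVal (u (4 * k + 3)) (u (4 * k + 2))) := by
  rw [tMap_a3, tMap_a2, pairVal_hi_lo]
lemma tMap_high (k : ℕ) (c d : ZMod 4) (u : ℕ → Bool) :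
    pairVal (tMap k c d u (4 * k + 5)) (tMap k c d u (4 * k + 4)) =
      pairVal (u (4 * k + 5)) (u (4 * k + 4)) + c := by
  rw [tMap_a5, tMap_a4, pairVal_hi_lo]

lemma tMap_inv (k : ℕ) (c d : ZMod 4) (u : ℕ → Bool) :
    tMap k (-c) (if loBit c then d else -d) (tMap k c d u) = u := by
  funext i
  have h := fun j => lt_or_ge j (4 * k + 2)
  by_cases h2 : i = 4 * k + 2
  · subst h2
    rw [tMap_a2, tMap_low, newLow_inv, loBit_pairVal]
  by_cases h3 : i = 4 * k + 3
  · subst h3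
    rw [tMap_a3, tMap_low, newLow_inv, hiBit_pairVal]
  by_cases h4 : i = 4 * k + 4
  · subst h4
    rw [tMap_a4, tMap_high, add_neg_cancel_right, loBit_pairVal]
  by_cases h5 : i = 4 * k + 5
  · subst h5
    rw [tMap_a5, tMap_high, add_neg_cancel_right, hiBit_pairVal]
  · rw [tMap_out _ _ _ _ _ (by omega), tMap_out _ _ _ _ _ (by omega)]

lemma tMap_inv' (k : ℕ) (c d : ZMod 4) (u : ℕ → Bool) :
    tMap k c d (tMap k (-c) (if loBit c then d else -d) u) = u := by
  have h := tMap_inv k (-c) (if loBit c then d else -d) u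
  rw [neg_neg, loBit_neg] at h
  by_cases hc : loBit c = true <;> simp [hc] at h ⊢ <;> exact h

lemma tMap_congr (k : ℕ) (c d : ZMod 4) (a b : ℕ → Bool)
    (h : ∀ j, j < 4 * k + 6 → a j = b j) :
    ∀ i, i < 4 * k + 6 → tMap k c d a i = tMap k c d b i := by
  intro i hi
  simp only [tMap]
  rw [h (4 * k + 2) (by omega), h (4 * k + 3) (by omega), h (4 * k + 4) (by omega),
    h (4 * k + 5) (by omega)]
  split_ifs <;> first | rfl | exact h i hi

lemma bsqRel_congr : ∀ (k : ℕ) (u u' v v' : ℕ → Bool),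
    (∀ i, i < 4 * k + 2 → u i = u' i) → (∀ i, i < 4 * k + 2 → v i = v' i) →
    (bsqRel k u v ↔ bsqRel k u' v') := by
  intro k
  induction k with
  | zero =>
    intro u u' v v' hu hv
    simp only [bsqRel]
    rw [hu 0 (by omega), hu 1 (by omega), hv 0 (by omega), hv 1 (by omega)]
  | succ k ih =>
    intro u u' v v' hu hv
    simp only [bsqRel]
    rw [hu (4 * k + 2) (by omega), hu (4 * k + 3) (by omega), hu (4 * k + 4) (by omega),
      hu (4 * k + 5) (by omega), hv (4 * k + 2) (by omega), hv (4 * k + 3) (by omega),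
      hv (4 * k + 4) (by omega), hv (4 * k + 5) (by omega)]
    apply or_congr
    · apply and_congr
      · constructor <;> intro h i h1 h2
        · rw [← hu i (by omega), ← hv i (by omega)]; exact h i h1 h2
        · rw [hu i (by omega), hv i (by omega)]; exact h i h1 h2
      · exact ih u u' v v' (fun i hi => hu i (by omega)) (fun i hi => hv i (by omega))
    · apply and_congr _ Iff.rfl
      constructor <;> intro h i h1
      · rw [← hu i (by omega), ← hv i (by omega)]; exact h i h1
      · rw [hu i (by omega), hv i (by omega)]; exact h i h1

lemma blockEq (k : ℕ) (a b : ℕ → Bool) :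
    (∀ i, 4 * k + 2 ≤ i → i ≤ 4 * k + 5 → a i = b i) ↔
      (pairVal (a (4 * k + 3)) (a (4 * k + 2)) = pairVal (b (4 * k + 3)) (b (4 * k + 2)) ∧
        pairVal (a (4 * k + 5)) (a (4 * k + 4)) = pairVal (b (4 * k + 5)) (b (4 * k + 4))) := by
  constructor
  · intro h
    rw [h (4 * k + 2) (by omega) (by omega), h (4 * k + 3) (by omega) (by omega),
      h (4 * k + 4) (by omega) (by omega), h (4 * k + 5) (by omega) (by omega)]
    exact ⟨rfl, rfl⟩
  · rintro ⟨h1, h2⟩ i hi hi'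
    rw [pairVal_inj] at h1 h2
    have : i = 4 * k + 2 ∨ i = 4 * k + 3 ∨ i = 4 * k + 4 ∨ i = 4 * k + 5 := by omega
    rcases this with h | h | h | h <;> subst h
    · exact h1.2
    · exact h1.1
    · exact h2.2
    · exact h2.1

lemma tMap_rel (k : ℕ) (c d : ZMod 4) (p q : ℕ → Bool) :
    bsqRel (k + 1) (tMap k c d p) (tMap k c d q) ↔ bsqRel (k + 1) p q := by
  simp only [bsqRel]
  apply or_congr
  · apply and_congr
    · rw [blockEq, blockEq, tMap_low, tMap_low, tMap_high, tMap_high, newLow_inj,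
        add_left_inj]
    · exact bsqRel_congr k _ _ _ _ (fun i hi => tMap_out k c d p i (Or.inl hi))
        (fun i hi => tMap_out k c d q i (Or.inl hi))
  · apply and_congr
    · constructor <;> intro h i h1
      · rw [← tMap_out k c d p i (Or.inl h1), ← tMap_out k c d q i (Or.inl h1)]; exact h i h1
      · rw [tMap_out k c d p i (Or.inl h1), tMap_out k c d q i (Or.inl h1)]; exact h i h1
    · rw [tMap_high, tMap_high, tMap_low, tMap_low, tMap_a4, tMap_a4]
      have hp4 : p (4 * k + 4) = loBit (pairVal (p (4 * k + 5)) (p (4 * k + 4))) :=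
        (loBit_pairVal _ _).symm
      have hq4 : q (4 * k + 4) = loBit (pairVal (q (4 * k + 5)) (q (4 * k + 4))) :=
        (loBit_pairVal _ _).symm
      exact keyA (p (4 * k + 2)) (p (4 * k + 3)) (p (4 * k + 4)) (p (4 * k + 5))
        (q (4 * k + 2)) (q (4 * k + 3)) (q (4 * k + 4)) (q (4 * k + 5)) c d

structure GA (k : ℕ) where
  f : (ℕ → Bool) → (ℕ → Bool)
  g : (ℕ → Bool) → (ℕ → Bool)
  gf : ∀ u, g (f u) = u
  fg : ∀ u, f (g u) = u
  ffix : ∀ u i, 4 * k + 2 ≤ i → f u i = u i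
  gfix : ∀ u i, 4 * k + 2 ≤ i → g u i = u i
  floc : ∀ u v, (∀ i, i < 4 * k + 2 → u i = v i) → ∀ i, i < 4 * k + 2 → f u i = f v i
  gloc : ∀ u v, (∀ i, i < 4 * k + 2 → u i = v i) → ∀ i, i < 4 * k + 2 → g u i = g v i
  hrel : ∀ u v, bsqRel k (f u) (f v) ↔ bsqRel k u v

lemma GA.floc_iff {k : ℕ} (ψ : GA k) (u v : ℕ → Bool) :
    (∀ i, i < 4 * k + 2 → ψ.f u i = ψ.f v i) ↔ (∀ i, i < 4 * k + 2 → u i = v i) := by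
  constructor
  · intro h
    have := ψ.gloc (ψ.f u) (ψ.f v) h
    rwa [ψ.gf, ψ.gf] at this
  · exact ψ.floc u v

lemma GA.lift_rel {k : ℕ} (ψ : GA k) (a b : ℕ → Bool) :
    bsqRel (k + 1) (ψ.f a) (ψ.f b) ↔ bsqRel (k + 1) a b := by
  simp only [bsqRel]
  rw [ψ.ffix a (4 * k + 2) (by omega), ψ.ffix a (4 * k + 3) (by omega),
    ψ.ffix a (4 * k + 4) (by omega), ψ.ffix a (4 * k + 5) (by omega),
    ψ.ffix b (4 * k + 2) (by omega), ψ.ffix b (4 * k + 3) (by omega),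
    ψ.ffix b (4 * k + 4) (by omega), ψ.ffix b (4 * k + 5) (by omega)]
  apply or_congr
  · apply and_congr _ (ψ.hrel a b)
    constructor <;> intro h i h1 h2
    · rw [← ψ.ffix a i (by omega), ← ψ.ffix b i (by omega)]; exact h i h1 h2
    · rw [ψ.ffix a i (by omega), ψ.ffix b i (by omega)]; exact h i h1 h2
  · exact and_congr (ψ.floc_iff a b) Iff.rfl

lemma ga_trans : ∀ (k : ℕ) (u v : ℕ → Bool), ∃ φ : GA k, ∀ i, i < 4 * k + 2 → φ.f u i = v i := by
  intro k
  induction k with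
  | zero =>
    intro u v
    refine ⟨⟨fun w i => if i < 2 then xor (w i) (xor (u i) (v i)) else w i,
      fun w i => if i < 2 then xor (w i) (xor (u i) (v i)) else w i,
      ?_, ?_, ?_, ?_, ?_, ?_, ?_⟩, ?_⟩
    · intro w; funext i; dsimp only; by_cases h : i < 2 <;> simp [h, xor_cancel]
    · intro w; funext i; dsimp only; by_cases h : i < 2 <;> simp [h, xor_cancel]
    · intro w i hi; rw [if_neg (by omega)]
    · intro w i hi; rw [if_neg (by omega)]
    · intro a b h i hi
      rw [if_pos (by omega), if_pos (by omega), h i (by omega)]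
    · intro a b h i hi
      rw [if_pos (by omega), if_pos (by omega), h i (by omega)]
    · intro a b
      simp only [bsqRel]
      rw [if_pos (by omega), if_pos (by omega), if_pos (by omega), if_pos (by omega),
        xor_eq_iff, xor_eq_iff]
    · intro i hi
      dsimp only; rw [if_pos (by omega), xor_target]
  | succ k ih =>
    intro u v
    obtain ⟨ψ, hψ⟩ := ih u v
    set hu := pairVal (u (4 * k + 5)) (u (4 * k + 4)) with hhu
    set lu := pairVal (u (4 * k + 3)) (u (4 * k + 2)) with hlu
    set hv := pairVal (v (4 * k + 5)) (v (4 * k + 4)) with hhv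
    set lv := pairVal (v (4 * k + 3)) (v (4 * k + 2)) with hlv
    set c := hv - hu with hc
    set d := if loBit c then lv + lu else lv - lu with hd
    have hfb : ∀ w, ∀ i, 4 * k + 2 ≤ i → ψ.f w i = w i := ψ.ffix
    have key : ∀ w, pairVal (ψ.f w (4 * k + 3)) (ψ.f w (4 * k + 2)) =
        pairVal (w (4 * k + 3)) (w (4 * k + 2)) := by
      intro w; rw [hfb w _ (by omega), hfb w _ (by omega)]
    have key2 : ∀ w, pairVal (ψ.f w (4 * k + 5)) (ψ.f w (4 * k + 4)) =
        pairVal (w (4 * k + 5)) (w (4 * k + 4)) := by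
      intro w; rw [hfb w _ (by omega), hfb w _ (by omega)]
    refine ⟨⟨fun w => tMap k c d (ψ.f w),
      fun w => ψ.g (tMap k (-c) (if loBit c then d else -d) w),
      ?_, ?_, ?_, ?_, ?_, ?_, ?_⟩, ?_⟩
    · intro w; rw [tMap_inv, ψ.gf]
    · intro w; rw [ψ.fg, tMap_inv']
    · intro w i hi
      rw [tMap_out _ _ _ _ _ (by omega), ψ.ffix w i (by omega)]
    · intro w i hi
      rw [ψ.gfix _ i (by omega), tMap_out _ _ _ _ _ (by omega)]
    · intro a b h i hi
      refine tMap_congr k c d (ψ.f a) (ψ.f b) ?_ i (by omega)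
      intro j hj
      by_cases hj2 : j < 4 * k + 2
      · exact ψ.floc a b (fun i' hi' => h i' (by omega)) j hj2
      · rw [ψ.ffix a j (by omega), ψ.ffix b j (by omega)]; exact h j (by omega)
    · intro a b h i hi
      have h2 : ∀ j, j < 4 * k + 6 →
          tMap k (-c) (if loBit c then d else -d) a j =
          tMap k (-c) (if loBit c then d else -d) b j :=
        tMap_congr k _ _ a b (fun j hj => h j (by omega))
      by_cases hj2 : i < 4 * k + 2
      · exact ψ.gloc _ _ (fun i' hi' => h2 i' (by omega)) i hj2
      · rw [ψ.gfix _ i (by omega), ψ.gfix _ i (by omega)]; exact h2 i (by omega)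
    · intro a b
      rw [tMap_rel, ψ.lift_rel]
    · intro i hi
      dsimp only
      have : i < 4 * k + 2 ∨ i = 4 * k + 2 ∨ i = 4 * k + 3 ∨ i = 4 * k + 4 ∨ i = 4 * k + 5 := by
        omega
      rcases this with h | h | h | h | h
      · rw [tMap_out _ _ _ _ _ (by omega)]; exact hψ i h
      · subst h
        rw [tMap_a2, key u, ← hlu, hd, newLow_target, hlv, loBit_pairVal]
      · subst h
        rw [tMap_a3, key u, ← hlu, hd, newLow_target, hlv, hiBit_pairVal]
      · subst h
        rw [tMap_a4, key2 u, ← hhu, hc]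
        rw [show hu + (hv - hu) = hv by ring, hhv, loBit_pairVal]
      · subst h
        rw [tMap_a5, key2 u, ← hhu, hc]
        rw [show hu + (hv - hu) = hv by ring, hhv, hiBit_pairVal]

theorem bsq_vertexTransitive (n : ℕ) (hn : 2 ≤ n) (hmod : n % 4 = 2)
    (u v : BSQVertex n) :
    ∃ φ : BSQ n ≃g BSQ n, φ u = v := by
  obtain ⟨φ, hφ⟩ := ga_trans ((n - 2) / 4) u.1 v.1
  have hK : 4 * ((n - 2) / 4) + 2 = n := by omega
  have memf : ∀ w : BSQVertex n, ∀ i, n ≤ i → φ.f w.1 i = false := by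
    intro w i hi
    rw [φ.ffix w.1 i (by omega)]; exact w.2 i hi
  have memg : ∀ w : BSQVertex n, ∀ i, n ≤ i → φ.g w.1 i = false := by
    intro w i hi
    rw [φ.gfix w.1 i (by omega)]; exact w.2 i hi
  refine ⟨⟨⟨fun w => ⟨φ.f w.1, memf w⟩, fun w => ⟨φ.g w.1, memg w⟩,
    fun w => Subtype.ext (φ.gf w.1), fun w => Subtype.ext (φ.fg w.1)⟩, ?_⟩, ?_⟩
  · intro a b
    simp only [BSQ, SimpleGraph.fromRel_adj, Equiv.coe_fn_mk]
    constructor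
    · rintro ⟨hne, h⟩
      refine ⟨fun hab => hne (by rw [hab]), ?_⟩
      rcases h with h | h
      · exact Or.inl ((φ.hrel a.1 b.1).mp h)
      · exact Or.inr ((φ.hrel b.1 a.1).mp h)
    · rintro ⟨hne, h⟩
      refine ⟨fun hab => hne ?_, ?_⟩
      · have := congrArg (fun w : BSQVertex n => (φ.g w.1 : ℕ → Bool)) hab
        change φ.g (φ.f a.1) = φ.g (φ.f b.1) at this
        simp only [φ.gf] at this
        exact Subtype.ext this
      rcases h with h | h
      · exact Or.inl ((φ.hrel a.1 b.1).mpr h)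
      · exact Or.inr ((φ.hrel b.1 a.1).mpr h)
  · apply Subtype.ext
    funext i
    by_cases hi : i < n
    · exact hφ i (by omega)
    · show φ.f u.1 i = v.1 i
      rw [memf u i (by omega), v.2 i (by omega)]
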